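/- arXiv:1003.3454 — 6 statements merged into one kernel-verified Lean document; each statement's English description precedes it below -/
import Mathlib

section
/- Let X be a proper non-compact metric space and ξ a coarse filter on X. Then either ξ is the trivial filter {X}, or ξ is finer than the Fréchet filter (the filter of sets with relatively compact complement). -/
/-- A filter `ξ` on a metric space is *coarse* if for every `F ∈ ξ` and every `r > 0`
the set `F^{(r)} = {x : d(x, Fᶜ) > r}` also belongs to `ξ`. -/
def IsCoarseFilter {X : Type*} [MetricSpace X] (ξ : Filter X) : Prop :=
  ∀ F ∈ ξ, ∀ r : ℝ, 0 < r → {x : X | ENNReal.ofReal r < EMetric.infEdist x Fᶜ} ∈ ξ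

theorem stmt7 {X : Type*} [MetricSpace X] [ProperSpace X] (hX : ¬ CompactSpace X)
    (ξ : Filter X) (hξ : IsCoarseFilter ξ) :
    ξ = ⊤ ∨ ξ ≤ Filter.cocompact X := by
  by_cases h : ξ = ⊤
  · exact Or.inl h
  right
  obtain ⟨F, hF, hFne⟩ : ∃ F ∈ ξ, F ≠ Set.univ := by
    by_contra hc
    push_neg at hc
    exact h (Filter.ext fun s => ⟨fun hs => by rw [hc s hs]; exact Filter.univ_mem,
      fun hs => by rw [Filter.mem_top] at hs; rw [hs]; exact Filter.univ_mem⟩)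
  obtain ⟨p, hp⟩ : ∃ p, p ∉ F := by
    by_contra hc
    push_neg at hc
    exact hFne (Set.eq_univ_of_forall hc)
  have key : ∀ r : ℝ, 0 < r → (Metric.closedBall p r)ᶜ ∈ ξ := by
    intro r hr
    refine Filter.mem_of_superset (hξ F hF r hr) ?_
    intro x hx
    simp only [Set.mem_setOf_eq] at hx
    have h1 : EMetric.infEdist x Fᶜ ≤ edist x p := EMetric.infEdist_le_edist_of_mem hp
    have h2 : ENNReal.ofReal r < edist x p := lt_of_lt_of_le hx h1
    rw [edist_dist, ENNReal.ofReal_lt_ofReal_iff_of_nonneg hr.le] at h2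
    simp only [Set.mem_compl_iff, Metric.mem_closedBall, not_le]
    exact h2
  intro s hs
  obtain ⟨K, hK, hKs⟩ := Filter.hasBasis_cocompact.mem_iff.1 hs
  obtain ⟨r, hKr⟩ := hK.isBounded.subset_closedBall p
  refine Filter.mem_of_superset (key (max r 1) (by positivity)) ?_
  intro x hx
  apply hKs
  intro hxK
  exact hx (Metric.closedBall_subset_closedBall (le_max_left r 1) (hKr hxK))
end

section
/- Let X be a locally compact group. A filter ξ on X is coarse (for every F ∈ ξ and every compact K ⊂ X there exists G ∈ ξ with KG ⊂ F) if and only if ξ is round (the sets VG with V a neighborhood of e and G ∈ ξ form a basis of ξ) and left invariant (xF ∈ ξ whenever x ∈ X and F ∈ ξ). -/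
open Pointwise

theorem stmt9 {X : Type*} [Group X] [TopologicalSpace X] [IsTopologicalGroup X]
    [LocallyCompactSpace X] (ξ : Filter X) :
    (∀ F ∈ ξ, ∀ K : Set X, IsCompact K → ∃ G ∈ ξ, K * G ⊆ F) ↔
      ((∀ F ∈ ξ, ∃ V ∈ nhds (1 : X), ∃ G ∈ ξ, V * G ⊆ F) ∧
        (∀ x : X, ∀ F ∈ ξ, (x • F) ∈ ξ)) := by
  constructor
  · intro h
    constructor
    · intro F hF
      obtain ⟨K, hKc, hKn⟩ := exists_compact_mem_nhds (1 : X)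
      obtain ⟨G, hG, hGF⟩ := h F hF K hKc
      exact ⟨K, hKn, G, hG, hGF⟩
    · intro x F hF
      obtain ⟨G, hG, hGF⟩ := h F hF {x⁻¹} isCompact_singleton
      refine Filter.mem_of_superset hG fun g hg => ?_
      have : x⁻¹ * g ∈ F := hGF ⟨x⁻¹, rfl, g, hg, rfl⟩
      exact ⟨x⁻¹ * g, this, by show x * (x⁻¹ * g) = g; group⟩
  · rintro ⟨hround, hinv⟩ F hF K hKc
    obtain ⟨V, hV, G, hG, hVGF⟩ := hround F hF
    have hVo : IsOpen (interior V) := isOpen_interior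
    have h1V : (1 : X) ∈ interior V := mem_interior_iff_mem_nhds.mpr hV
    -- cover K by right translates of interior V
    have hcov : ∀ k ∈ K, interior V * {k} ∈ nhds k := by
      intro k _
      have : IsOpen (interior V * {k}) := hVo.mul_right
      exact this.mem_nhds ⟨1, h1V, k, rfl, one_mul k⟩
    obtain ⟨t, htK, hcover⟩ := hKc.elim_nhds_subcover (fun k => interior V * {k}) hcov
    refine ⟨⋂ x ∈ t, x⁻¹ • G, ?_, ?_⟩
    · exact (Filter.biInter_finset_mem t).mpr fun x _ => hinv x⁻¹ G hG
    · rintro z ⟨k, hk, g, hg, rfl⟩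
      obtain ⟨x, hxt, hkx⟩ := by
        have := hcover hk
        simpa using this
      have hgx : g ∈ x⁻¹ • G := Set.mem_iInter₂.mp hg x hxt
      obtain ⟨g', hg', rfl⟩ := hgx
      show k * (x⁻¹ • g') ∈ F
      have heq : k * (x⁻¹ • g') = (k * x⁻¹) * g' := by
        simp [smul_eq_mul]; group
      rw [heq]
      exact hVGF ⟨k * x⁻¹, interior_subset hkx, g', hg', rfl⟩
end

section
/- Let X be a metric space and ξ a filter on X. For bounded uniformly continuous φ: X → ℂ, lim_ξ φ = 0 holds if and only if lim_{ξ°} φ = 0, where ξ° is the round envelope of ξ, i.e., the filter generated by the sets F_{(r)} = {x : d(x,F) ≤ r} for F ∈ ξ and r > 0. -/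
theorem stmt16 {X : Type*} [MetricSpace X] (ξ : Filter X) (φ : X → ℂ)
    (hφu : UniformContinuous φ) (hφb : ∃ C, ∀ x, ‖φ x‖ ≤ C) :
    Filter.Tendsto φ ξ (nhds 0) ↔
      Filter.Tendsto φ
        (Filter.generate {S : Set X | ∃ F ∈ ξ, ∃ r : ℝ, 0 < r ∧
          S = {x : X | EMetric.infEdist x F ≤ ENNReal.ofReal r}}) (nhds 0) := by
  constructor
  · intro h
    rw [NormedAddCommGroup.tendsto_nhds_zero] at h ⊢
    intro ε hε
    -- uniform continuity: get δ
    have := Metric.uniformContinuous_iff.mp hφu (ε/2) (by linarith)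
    obtain ⟨δ, hδ, hδ'⟩ := this
    set F : Set X := {x : X | ‖φ x‖ < ε/2} with hF
    have hFξ : F ∈ ξ := h (ε/2) (by linarith)
    set S : Set X := {x : X | EMetric.infEdist x F ≤ ENNReal.ofReal (δ/2)} with hS
    have hgen : S ∈ Filter.generate {S : Set X | ∃ F ∈ ξ, ∃ r : ℝ, 0 < r ∧
          S = {x : X | EMetric.infEdist x F ≤ ENNReal.ofReal r}} :=
      Filter.GenerateSets.basic ⟨F, hFξ, δ/2, by linarith, rfl⟩
    refine Filter.mem_of_superset hgen ?_
    intro x hx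
    have hlt : EMetric.infEdist x F < ENNReal.ofReal δ :=
      lt_of_le_of_lt hx (by
        exact ENNReal.ofReal_lt_ofReal_iff hδ |>.mpr (by linarith))
    obtain ⟨y, hyF, hxy⟩ := EMetric.infEdist_lt_iff.mp hlt
    have hdist : dist x y < δ := by
      rwa [edist_dist, ENNReal.ofReal_lt_ofReal_iff hδ] at hxy
    have := hδ' hdist
    have hy : ‖φ y‖ < ε/2 := hyF
    calc ‖φ x‖ = ‖φ x - φ y + φ y‖ := by ring_nf
      _ ≤ ‖φ x - φ y‖ + ‖φ y‖ := norm_add_le _ _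
      _ < ε/2 + ε/2 := by
          have : dist (φ x) (φ y) < ε/2 := this
          rw [dist_eq_norm] at this
          exact add_lt_add this hy
      _ = ε := by ring
  · intro h
    refine h.mono_left ?_
    rw [Filter.le_generate_iff]
    rintro S ⟨F, hF, r, hr, rfl⟩
    refine Filter.mem_of_superset hF ?_
    intro x hx
    simp only [Set.mem_setOf_eq]
    rw [show EMetric.infEdist x F = 0 from EMetric.infEdist_zero_of_mem hx]
    exact zero_le
end

section
/- Let X be a metric space and ξ a coarse filter on X. Then the set 𝓘_ξ = {φ ∈ C_u(X) : lim_ξ φ = 0} of bounded uniformly continuous functions vanishing along ξ is a coarse ideal: for each positive φ ∈ 𝓘_ξ and r > 0 there is a positive ψ ∈ 𝓘_ξ such that d(x,y) ≤ r and ψ(y) < 1 imply φ(x) < 1. Conversely, if 𝓘_ξ is a coarse ideal then ξ is a coarse filter (assuming ξ is round). -/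
open Metric Filter Set

theorem stmt17 {X : Type*} [MetricSpace X] (ξ : Filter X) :
    ((∀ F ∈ ξ, ∀ r : ℝ, 0 < r →
        {x : X | ENNReal.ofReal r < EMetric.infEdist x Fᶜ} ∈ ξ) →
      ∀ φ : X → ℝ, UniformContinuous φ → (∃ C, ∀ x, |φ x| ≤ C) → (∀ x, 0 ≤ φ x) →
        Filter.Tendsto φ ξ (nhds 0) →
        ∀ r : ℝ, 0 < r →
          ∃ ψ : X → ℝ, UniformContinuous ψ ∧ (∃ C, ∀ x, |ψ x| ≤ C) ∧ (∀ x, 0 ≤ ψ x) ∧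
            Filter.Tendsto ψ ξ (nhds 0) ∧
            ∀ x y : X, dist x y ≤ r → ψ y < 1 → φ x < 1) ∧
    ((∀ F ∈ ξ, ∃ G ∈ ξ, ∃ r : ℝ, 0 < r ∧
        {x : X | EMetric.infEdist x G ≤ ENNReal.ofReal r} ⊆ F) →
      (∀ φ : X → ℝ, UniformContinuous φ → (∃ C, ∀ x, |φ x| ≤ C) → (∀ x, 0 ≤ φ x) →
        Filter.Tendsto φ ξ (nhds 0) →
        ∀ r : ℝ, 0 < r →
          ∃ ψ : X → ℝ, UniformContinuous ψ ∧ (∃ C, ∀ x, |ψ x| ≤ C) ∧ (∀ x, 0 ≤ ψ x) ∧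
            Filter.Tendsto ψ ξ (nhds 0) ∧
            ∀ x y : X, dist x y ≤ r → ψ y < 1 → φ x < 1) →
      ∀ F ∈ ξ, ∀ r : ℝ, 0 < r →
        {x : X | ENNReal.ofReal r < EMetric.infEdist x Fᶜ} ∈ ξ) := by
  constructor
  · -- coarse filter ⇒ coarse ideal
    intro hcoarse φ hφUC _hφbd hφ0 hφlim r hr
    by_cases hF : ∃ x, 1 ≤ φ x
    · obtain ⟨x₀, hx₀⟩ := hF
      set F : Set X := {z | φ z < 1} with hFdef
      have hFmem : F ∈ ξ := hφlim (Iio_mem_nhds (by norm_num : (0:ℝ) < 1))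
      have hx₀F : x₀ ∈ Fᶜ := by simp [hFdef]; linarith
      have hFcne : (Fᶜ : Set X).Nonempty := ⟨x₀, hx₀F⟩
      set ψ : X → ℝ := fun y => max 0 (2 - infDist y Fᶜ / r) with hψdef
      have hψUC : UniformContinuous ψ := by
        have h1 : UniformContinuous fun y : X => 2 - infDist y Fᶜ / r := by
          simp only [div_eq_inv_mul]
          exact uniformContinuous_const.sub
            (((Metric.uniformContinuous_infDist_pt Fᶜ)).const_mul' _)
        exact ((LipschitzWith.id.const_max 0).uniformContinuous).comp h1
      refine ⟨ψ, hψUC, ⟨2, fun y => ?_⟩, fun y => le_max_left _ _, ?_, ?_⟩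
      · rw [abs_le]
        constructor
        · have := le_max_left (0:ℝ) (2 - infDist y Fᶜ / r); linarith
        · apply max_le (by norm_num)
          have h1 : 0 ≤ infDist y Fᶜ / r := div_nonneg infDist_nonneg hr.le
          linarith
      · -- tendsto 0
        have hG : {y : X | ENNReal.ofReal (2*r) < EMetric.infEdist y Fᶜ} ∈ ξ :=
          hcoarse F hFmem (2*r) (by linarith)
        refine Tendsto.congr' ?_ tendsto_const_nhds
        filter_upwards [hG] with y hy
        have hne : EMetric.infEdist y Fᶜ ≠ ⊤ := Metric.infEdist_ne_top hFcne
        have h2r : 2*r < infDist y Fᶜ := by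
          have := (ENNReal.ofReal_lt_iff_lt_toReal (by linarith) hne).mp hy
          simpa [Metric.infDist, EMetric.infEdist] using this
        have : infDist y Fᶜ / r > 2 := by
          rw [gt_iff_lt, lt_div_iff₀ hr]; linarith
        simp only [hψdef]
        rw [max_eq_left (by linarith)]
      · intro x y hxy hψy
        by_contra h
        push_neg at h
        have hxF : x ∈ Fᶜ := by simp [hFdef]; linarith
        have hle : infDist y Fᶜ ≤ dist y x := infDist_le_dist_of_mem hxF
        have : infDist y Fᶜ / r ≤ 1 := by
          rw [div_le_one hr]
          calc infDist y Fᶜ ≤ dist y x := hle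
            _ = dist x y := dist_comm _ _
            _ ≤ r := hxy
        have : (1:ℝ) ≤ ψ y := le_trans (by linarith) (le_max_right _ _)
        linarith
    · push_neg at hF
      exact ⟨fun _ => 0, uniformContinuous_const, ⟨0, by simp⟩, fun _ => le_refl _,
        tendsto_const_nhds, fun x y _ _ => hF x⟩
  · -- coarse ideal ⇒ coarse filter (round)
    intro hround hideal F hFmem r hr
    obtain ⟨G, hG, s, hs, hGF⟩ := hround F hFmem
    rcases G.eq_empty_or_nonempty with rfl | hGne
    · have : ξ = ⊥ := Filter.empty_mem_iff_bot.mp hG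
      simp [this]
    · set φ : X → ℝ := fun x => min 1 (infDist x G / s) with hφdef
      have hφUC : UniformContinuous φ := by
        have h1 : UniformContinuous fun x : X => infDist x G / s := by
          simp only [div_eq_inv_mul]
          exact ((Metric.uniformContinuous_infDist_pt G)).const_mul' _
        exact ((LipschitzWith.id.const_min 1).uniformContinuous).comp h1
      have hφ0 : ∀ x, 0 ≤ φ x := fun x =>
        le_min (by norm_num) (div_nonneg infDist_nonneg hs.le)
      have hφbd : ∃ C, ∀ x, |φ x| ≤ C :=
        ⟨1, fun x => abs_le.mpr ⟨by linarith [hφ0 x], min_le_left _ _⟩⟩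
      have hφlim : Filter.Tendsto φ ξ (nhds 0) := by
        refine Tendsto.congr' ?_ tendsto_const_nhds
        filter_upwards [hG] with z hz
        simp [hφdef, infDist_zero_of_mem hz]
      have hφF : ∀ z, φ z < 1 → z ∈ F := by
        intro z hz
        apply hGF
        have h1 : infDist z G / s < 1 := by
          by_contra hc
          push_neg at hc
          simp only [hφdef] at hz
          rw [min_eq_left (by linarith)] at hz
          exact absurd hz (lt_irrefl 1)
        have h2 : infDist z G < s := (div_lt_one hs).mp h1
        show EMetric.infEdist z G ≤ ENNReal.ofReal s
        unfold EMetric.infEdist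
        rw [ENNReal.le_ofReal_iff_toReal_le (Metric.infEdist_ne_top hGne) hs.le]
        exact h2.le
      obtain ⟨ψ, _, _, _, hψlim, hψkey⟩ :=
        hideal φ hφUC hφbd hφ0 hφlim (2*r) (by linarith)
      have hH : {y : X | ψ y < 1} ∈ ξ := hψlim (Iio_mem_nhds (by norm_num : (0:ℝ) < 1))
      filter_upwards [hH] with y hy
      show ENNReal.ofReal r < EMetric.infEdist y Fᶜ
      have key : ENNReal.ofReal (2*r) ≤ EMetric.infEdist y Fᶜ := by
        unfold EMetric.infEdist
        rw [EMetric.le_infEdist]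
        intro z hz
        have hdz : 2*r < dist z y := by
          by_contra hc
          push_neg at hc
          exact hz (hφF z (hψkey z y hc hy))
        rw [edist_dist]
        exact ENNReal.ofReal_le_ofReal (by rw [dist_comm]; linarith)
      calc ENNReal.ofReal r < ENNReal.ofReal (2*r) := by
            rw [ENNReal.ofReal_lt_ofReal_iff (by linarith)]; linarith
        _ ≤ _ := key
end

section
/- Let (X,d,μ) be a metric measure space satisfying inf_x μ(B_x(1/2)) > 0 and sup_x μ(B_x(r)) < ∞ for all r. Let T be a bounded controlled operator on L²(X,μ), i.e., there is d(T) ≥ 0 such that 𝟙_F T 𝟙_G = 0 whenever F,G are closed with d(F,G) > d(T). Then ‖T‖ ≤ N(d(T)+1)^{1/2} · sup_{x∈X} ‖𝟙_{B_x(1)} T‖, where N(r) = V(2r+2)/inf_x μ(B_x(1/2)) and V(r) = sup_x μ(B_x(r)). -/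
open MeasureTheory Metric ENNReal

section aux

variable {X : Type*} [MetricSpace X] [ProperSpace X]
    [MeasurableSpace X] [BorelSpace X] {μ : Measure X}

/-- squared L² norm as lintegral -/
private lemma sq_eLpNorm (μ : Measure X) (g : X → ℂ) :
    eLpNorm g 2 μ ^ 2 = ∫⁻ x, (‖g x‖₊ : ℝ≥0∞) ^ 2 ∂μ := by
  rw [eLpNorm_eq_lintegral_rpow_enorm_toReal two_ne_zero ENNReal.ofNat_ne_top]
  rw [ENNReal.toReal_ofNat]
  rw [← ENNReal.rpow_natCast _ 2, ← ENNReal.rpow_mul]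
  norm_num
  rfl

private lemma small_ball_ne_top {ν : ℝ} (hν : 0 < ν)
    (hν' : ∀ x : X, ν ≤ (μ (closedBall x (1/2))).toReal) (x : X) :
    μ (closedBall x (1/2)) ≠ ∞ := by
  intro h
  have := hν' x
  rw [h, ENNReal.toReal_top] at this
  linarith

private lemma ball_ne_top {ν : ℝ} (hν : 0 < ν)
    (hν' : ∀ x : X, ν ≤ (μ (closedBall x (1/2))).toReal) (x : X) (r : ℝ) :
    μ (closedBall x r) ≠ ∞ := by
  obtain ⟨t, ht⟩ := (isCompact_closedBall x r).elim_finite_subcover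
    (fun y : X => ball y (1/2)) (fun y => isOpen_ball)
    (fun z _ => Set.mem_iUnion.2 ⟨z, mem_ball_self (by norm_num)⟩)
  have hle : μ (closedBall x r) ≤ ∑ y ∈ t, μ (ball y (1/2)) :=
    (measure_mono ht).trans (measure_biUnion_finset_le t _)
  have : ∑ y ∈ t, μ (ball y (1/2)) < ∞ := by
    rw [ENNReal.sum_lt_top]
    intro y _
    exact lt_of_le_of_lt (measure_mono ball_subset_closedBall)
      (lt_top_iff_ne_top.2 (small_ball_ne_top hν hν' y))
  exact (lt_of_le_of_lt hle this).ne

/-- counting lemma: a 1-separated finite set inside a ball has controlled cardinality -/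
private lemma count_le {ν : ℝ} (hν : 0 < ν)
    (hν' : ∀ x : X, ν ≤ (μ (closedBall x (1/2))).toReal)
    (x : X) (R : ℝ) (t : Finset X)
    (hsep : (t : Set X).Pairwise fun a b => 1 < dist a b)
    (hin : ∀ z ∈ t, z ∈ closedBall x R) :
    ENNReal.ofReal ν * t.card ≤ μ (closedBall x (R + 1/2)) := by
  have hdisj : (t : Set X).PairwiseDisjoint fun z => closedBall z (1/2) := by
    intro a ha b hb hab
    refine Set.disjoint_left.2 fun y hya hyb => ?_
    have : dist a b ≤ 1 := by
      have h1 : dist a y ≤ 1/2 := by rw [dist_comm]; exact hya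
      have h2 : dist y b ≤ 1/2 := hyb
      calc dist a b ≤ dist a y + dist y b := dist_triangle a y b
        _ ≤ 1 := by linarith
    exact absurd this (not_le.2 (hsep ha hb hab))
  have hunion : (⋃ z ∈ t, closedBall z (1/2)) ⊆ closedBall x (R + 1/2) := by
    intro y hy
    simp only [Set.mem_iUnion] at hy
    obtain ⟨z, hz, hyz⟩ := hy
    have := hin z hz
    rw [mem_closedBall] at this hyz ⊢
    calc dist y x ≤ dist y z + dist z x := dist_triangle y z x
      _ ≤ R + 1/2 := by linarith
  calc ENNReal.ofReal ν * t.card = ∑ z ∈ t, ENNReal.ofReal ν := by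
        rw [Finset.sum_const, nsmul_eq_mul, mul_comm]
    _ ≤ ∑ z ∈ t, μ (closedBall z (1/2)) := by
        refine Finset.sum_le_sum fun z _ => ?_
        rw [← ENNReal.ofReal_toReal (small_ball_ne_top hν hν' z)]
        exact ENNReal.ofReal_le_ofReal (hν' z)
    _ = μ (⋃ z ∈ t, closedBall z (1/2)) :=
        (measure_biUnion_finset hdisj fun z _ => measurableSet_closedBall).symm
    _ ≤ μ (closedBall x (R + 1/2)) := measure_mono hunion

/-- existence of a maximal 1-separated set -/
private lemma exists_maximal_separated (X : Type*) [MetricSpace X] :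
    ∃ Z : Set X, (Z.Pairwise fun a b => 1 < dist a b) ∧ ∀ x : X, ∃ z ∈ Z, dist x z ≤ 1 := by
  have hch : ∀ c ⊆ {s : Set X | s.Pairwise fun a b => 1 < dist a b},
      IsChain (fun x1 x2 => x1 ⊆ x2) c →
      ∃ ub ∈ {s : Set X | s.Pairwise fun a b => 1 < dist a b}, ∀ s ∈ c, s ⊆ ub := by
    intro c hc hchain
    refine ⟨⋃₀ c, ?_, fun s hs => Set.subset_sUnion_of_mem hs⟩
    intro a ha b hb hab
    obtain ⟨s, hs, has⟩ := ha
    obtain ⟨u, hu, hbu⟩ := hb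
    rcases hchain.total hs hu with h | h
    · exact hc hu (h has) hbu hab
    · exact hc hs has (h hbu) hab
  obtain ⟨Z, hZ⟩ := zorn_subset {s : Set X | s.Pairwise fun a b => 1 < dist a b} hch
  refine ⟨Z, hZ.prop, fun x => ?_⟩
  by_contra h
  push_neg at h
  have hxZ : x ∉ Z := fun hx => absurd (le_of_eq (dist_self x)) (not_le.2 (by
    have := h x hx; linarith))
  have hmem : (insert x Z) ∈ {s : Set X | s.Pairwise fun a b => 1 < dist a b} := by
    refine Set.Pairwise.insert hZ.prop fun z hz hne => ?_
    have := h z hz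
    exact ⟨this, lt_of_lt_of_eq this (dist_comm x z)⟩
  have := hZ.le_of_ge hmem (Set.subset_insert x Z)
  exact hxZ (this (Set.mem_insert x Z))

end aux

theorem stmt18 {X : Type*} [MetricSpace X] [ProperSpace X]
    [MeasurableSpace X] [BorelSpace X] (μ : Measure X)
    (ν : ℝ) (hν : 0 < ν) (hν' : ∀ x : X, ν ≤ (μ (closedBall x (1/2))).toReal)
    (V : ℝ → ℝ) (hV : ∀ (x : X) (r : ℝ), (μ (closedBall x r)).toReal ≤ V r)
    (M : Set X → (Lp ℂ 2 μ →L[ℂ] Lp ℂ 2 μ))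
    (hM : ∀ A : Set X, MeasurableSet A → ∀ f : Lp ℂ 2 μ,
      ⇑(M A f) =ᵐ[μ] A.indicator ⇑f)
    (T : Lp ℂ 2 μ →L[ℂ] Lp ℂ 2 μ) (dT : ℝ) (hdT : 0 ≤ dT)
    (hctrl : ∀ F G : Set X, IsClosed F → IsClosed G →
      (ENNReal.ofReal dT < ⨅ x ∈ F, ⨅ y ∈ G, edist x y) →
      (M F).comp (T.comp (M G)) = 0) :
    ‖T‖ ≤ Real.sqrt (V (2*(dT+1)+2) / ν) *
      ⨆ x : X, ‖(M (closedBall x 1)).comp T‖ := by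
  classical
  -- trivial case: empty space
  rcases isEmpty_or_nonempty X with hX | hX
  · haveI := hX
    refine ContinuousLinearMap.opNorm_le_bound _ ?_ fun h => ?_
    · rw [Real.iSup_of_isEmpty]
      simp
    · have hT : T h = 0 := Lp.ext (MeasureTheory.ae_of_all μ fun x => isEmptyElim x)
      rw [hT, norm_zero, Real.iSup_of_isEmpty]
      simp [mul_nonneg, norm_nonneg]
  -- notation
  obtain ⟨x₀⟩ := hX
  set N : ℝ := V (2*(dT+1)+2) / ν with hN
  set S : ℝ := ⨆ x : X, ‖(M (closedBall x 1)).comp T‖ with hSdef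
  have hS0 : 0 ≤ S := Real.iSup_nonneg fun x => norm_nonneg _
  have hVν : ν ≤ V (2*(dT+1)+2) := by
    refine le_trans (hν' x₀) (le_trans ?_ (hV x₀ _))
    exact ENNReal.toReal_mono (ball_ne_top hν hν' x₀ _)
      (measure_mono (closedBall_subset_closedBall (by linarith)))
  have hN0 : 0 ≤ N := div_nonneg (by linarith) hν.le
  -- sup bound
  have hBdd : BddAbove (Set.range fun x : X => ‖(M (closedBall x 1)).comp T‖) := by
    refine ⟨‖T‖, ?_⟩
    rintro _ ⟨x, rfl⟩
    refine ContinuousLinearMap.opNorm_le_bound _ (norm_nonneg T) fun g => ?_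
    have h1 : ‖M (closedBall x 1) (T g)‖ ≤ ‖T g‖ := by
      rw [Lp.norm_def, Lp.norm_def]
      refine ENNReal.toReal_mono (Lp.eLpNorm_ne_top _) ?_
      rw [eLpNorm_congr_ae (hM _ measurableSet_closedBall (T g))]
      exact eLpNorm_mono_ae (Filter.Eventually.of_forall fun y =>
        norm_indicator_le_norm_self _ _)
    exact h1.trans (T.le_opNorm g)
  have hSle : ∀ z : X, ‖(M (closedBall z 1)).comp T‖ ≤ S := fun z => le_ciSup hBdd z
  -- maximal separated set
  obtain ⟨Z, hZsep, hZcov⟩ := exists_maximal_separated X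
  -- countability of Z
  have hZc : Z.Countable := by
    have hfin : ∀ n : ℕ, (Z ∩ closedBall x₀ n).Finite := by
      intro n
      by_contra hinf
      have hinf' : (Z ∩ closedBall x₀ (n:ℝ)).Infinite := hinf
      clear hinf
      set k : ℕ := ⌈(μ (closedBall x₀ ((n:ℝ) + 1/2))).toReal / ν⌉₊ + 1 with hk
      obtain ⟨t, hts, htc⟩ := hinf'.exists_subset_card_eq k
      have h1 := count_le hν hν' x₀ n t
        (hZsep.mono (hts.trans Set.inter_subset_left))
        (fun z hz => (hts hz).2)
      have h2 : ν * k ≤ (μ (closedBall x₀ ((n:ℝ) + 1/2))).toReal := by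
        have := ENNReal.toReal_mono (ball_ne_top hν hν' x₀ _) h1
        rwa [ENNReal.toReal_mul, ENNReal.toReal_ofReal hν.le, htc,
          ENNReal.toReal_natCast] at this
      have h3 : (k:ℝ) ≤ (μ (closedBall x₀ ((n:ℝ) + 1/2))).toReal / ν := by
        rw [le_div_iff₀ hν]; linarith [h2, mul_comm ν (k:ℝ)]
      have h4 : (k:ℝ) ≤ ⌈(μ (closedBall x₀ ((n:ℝ) + 1/2))).toReal / ν⌉₊ :=
        h3.trans (Nat.le_ceil _)
      rw [hk] at h4
      push_cast at h4
      linarith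
    have : Z ⊆ ⋃ n : ℕ, (Z ∩ closedBall x₀ n) := by
      intro z hz
      obtain ⟨n, hn⟩ := exists_nat_ge (dist z x₀)
      exact Set.mem_iUnion.2 ⟨n, hz, mem_closedBall.2 hn⟩
    exact Set.Countable.mono this (Set.countable_iUnion fun n => (hfin n).countable)
  haveI : Countable ↥Z := hZc.to_subtype
  -- multiplicity bound
  have hmult : ∀ x : X, ∑' (z : Z), (ball (z:X) (dT+2)).indicator (1 : X → ℝ≥0∞) x
      ≤ ENNReal.ofReal N := by
    intro x
    rw [ENNReal.tsum_eq_iSup_sum]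
    refine iSup_le fun t => ?_
    set u : Finset X := (t.filter fun z : Z => x ∈ ball (z:X) (dT+2)).image Subtype.val
      with hu
    have hcard : (t.filter fun z : Z => x ∈ ball (z:X) (dT+2)).card = u.card :=
      (Finset.card_image_of_injective _ Subtype.val_injective).symm
    have hsum : ∑ z ∈ t, (ball (z:X) (dT+2)).indicator (1:X→ℝ≥0∞) x = (u.card : ℝ≥0∞) := by
      rw [← hcard, Finset.card_filter]
      push_cast
      refine Finset.sum_congr rfl fun z _ => ?_
      by_cases hz : x ∈ ball (z:X) (dT+2) <;> simp [hz]
    have humem : ∀ z ∈ u, z ∈ closedBall x (dT+2) := by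
      intro z hz
      rw [hu] at hz
      simp only [Finset.mem_image, Finset.mem_filter] at hz
      obtain ⟨w, ⟨_, hw⟩, rfl⟩ := hz
      rw [mem_ball] at hw
      rw [mem_closedBall, dist_comm]
      exact hw.le
    have husep : (u : Set X).Pairwise fun a b => 1 < dist a b := by
      refine hZsep.mono ?_
      intro z hz
      rw [hu] at hz
      simp only [Finset.coe_image, Set.mem_image] at hz
      obtain ⟨w, _, rfl⟩ := hz
      exact w.2
    have h1 := count_le hν hν' x (dT+2) u husep humem
    have h2 : μ (closedBall x (dT+2+1/2)) ≤ μ (closedBall x (2*(dT+1)+2)) :=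
      measure_mono (closedBall_subset_closedBall (by linarith))
    have h3 : ν * u.card ≤ V (2*(dT+1)+2) := by
      have := ENNReal.toReal_mono (ball_ne_top hν hν' x _) (h1.trans h2)
      rw [ENNReal.toReal_mul, ENNReal.toReal_ofReal hν.le, ENNReal.toReal_natCast] at this
      exact this.trans (hV x _)
    have h4 : (u.card : ℝ) ≤ N := by
      rw [hN, le_div_iff₀ hν]; linarith [mul_comm ν (u.card:ℝ)]
    rw [hsum, ← ENNReal.ofReal_natCast]
    exact ENNReal.ofReal_le_ofReal h4
  -- covering bound
  have hcov : ∀ x : X, (1:ℝ≥0∞) ≤ ∑' (z : Z), (closedBall (z:X) 1).indicator (1:X→ℝ≥0∞) x := by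
    intro x
    obtain ⟨z, hzZ, hz⟩ := hZcov x
    have h1 : (closedBall z 1).indicator (1:X→ℝ≥0∞) x = 1 :=
      Set.indicator_of_mem (mem_closedBall.2 hz) _
    calc (1:ℝ≥0∞) = (closedBall z 1).indicator (1:X→ℝ≥0∞) x := h1.symm
      _ ≤ _ := ENNReal.le_tsum (⟨z, hzZ⟩ : Z)
  -- pointwise indicator identity
  have hind : ∀ (A : Set X) (h : X → ℝ≥0∞) (x : X),
      A.indicator h x = A.indicator (1:X→ℝ≥0∞) x * h x := by
    intro A h x
    by_cases hx : x ∈ A <;> simp [hx]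
  have hindsq : ∀ (A : Set X) (g : X → ℂ) (x : X),
      (‖A.indicator g x‖₊ : ℝ≥0∞)^2 = A.indicator (fun y => (‖g y‖₊:ℝ≥0∞)^2) x := by
    intro A g x
    by_cases hx : x ∈ A <;> simp [hx]
  -- norm of M A g in ENNReal
  have hMnorm : ∀ (A : Set X), MeasurableSet A → ∀ g : Lp ℂ 2 μ,
      ENNReal.ofReal ‖M A g‖ = eLpNorm (A.indicator ⇑g) 2 μ := by
    intro A hA g
    rw [Lp.norm_def, ENNReal.ofReal_toReal (Lp.eLpNorm_ne_top _),
      eLpNorm_congr_ae (hM A hA g)]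
  -- main estimate for fixed f
  refine ContinuousLinearMap.opNorm_le_bound _
    (mul_nonneg (Real.sqrt_nonneg _) hS0) fun f => ?_
  set g : X → ℂ := ⇑(T f) with hg
  have hgmeas : AEMeasurable (fun x => (‖g x‖₊ : ℝ≥0∞)^2) μ :=
    ((Lp.aestronglyMeasurable (T f)).aemeasurable.enorm).pow_const 2
  have hfmeas : AEMeasurable (fun x => (‖(f : X → ℂ) x‖₊ : ℝ≥0∞)^2) μ :=
    ((Lp.aestronglyMeasurable f).aemeasurable.enorm).pow_const 2
  -- step 1: covering inequality
  have step1 : eLpNorm g 2 μ ^ 2 ≤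
      ∑' (z : Z), ∫⁻ x, (closedBall (z:X) 1).indicator (fun y => (‖g y‖₊:ℝ≥0∞)^2) x ∂μ := by
    rw [sq_eLpNorm]
    rw [← lintegral_tsum fun z : Z =>
      (hgmeas.indicator measurableSet_closedBall :
        AEMeasurable ((closedBall (z:X) 1).indicator fun y => (‖g y‖₊:ℝ≥0∞)^2) μ)]
    refine lintegral_mono fun x => ?_
    calc (‖g x‖₊:ℝ≥0∞)^2 = 1 * (‖g x‖₊:ℝ≥0∞)^2 := (one_mul _).symm
      _ ≤ (∑' (z : Z), (closedBall (z:X) 1).indicator (1:X→ℝ≥0∞) x) * (‖g x‖₊:ℝ≥0∞)^2 :=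
        mul_le_mul_left (hcov x) _
      _ = ∑' (z : Z), (closedBall (z:X) 1).indicator (1:X→ℝ≥0∞) x * (‖g x‖₊:ℝ≥0∞)^2 :=
        ENNReal.tsum_mul_right.symm
      _ = ∑' (z : Z), (closedBall (z:X) 1).indicator (fun y => (‖g y‖₊:ℝ≥0∞)^2) x := by
        refine tsum_congr fun z => ?_
        exact (hind (closedBall (z:X) 1) (fun y => (‖g y‖₊:ℝ≥0∞)^2) x).symm
  -- step 2: operator estimate per ball
  have hop : ∀ z : X, ‖M (closedBall z 1) (T f)‖ ≤ S * ‖M (ball z (dT+2)) f‖ := by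
    intro z
    have hid : M (ball z (dT+2)) f + M (ball z (dT+2))ᶜ f = f := by
      refine Lp.ext ?_
      filter_upwards [Lp.coeFn_add (M (ball z (dT+2)) f) (M (ball z (dT+2))ᶜ f),
        hM _ measurableSet_ball.compl f, hM _ measurableSet_ball f] with x h1 h2 h3
      rw [h1]
      simp only [Pi.add_apply]
      rw [h2, h3]
      exact congrFun (Set.indicator_self_add_compl (ball z (dT+2)) (⇑f)) x
    have hdist : ENNReal.ofReal dT <
        ⨅ x ∈ closedBall z 1, ⨅ y ∈ (ball z (dT+2))ᶜ, edist x y := by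
      refine lt_of_lt_of_le ((ENNReal.ofReal_lt_ofReal_iff (by linarith)).2
        (by linarith : dT < dT + 1)) ?_
      refine le_iInf fun a => le_iInf fun ha => le_iInf fun b => le_iInf fun hb => ?_
      rw [edist_dist]
      refine ENNReal.ofReal_le_ofReal ?_
      rw [mem_closedBall] at ha
      rw [Set.mem_compl_iff, mem_ball, not_lt] at hb
      have := dist_triangle b a z
      have hba : dist a b = dist b a := dist_comm a b
      have haz : dist a z ≤ 1 := ha
      linarith
    have hzero := hctrl (closedBall z 1) (ball z (dT+2))ᶜ isClosed_closedBall
      isOpen_ball.isClosed_compl hdist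
    have h0 : M (closedBall z 1) (T (M (ball z (dT+2))ᶜ f)) = 0 := by
      have := congrArg (fun L : Lp ℂ 2 μ →L[ℂ] Lp ℂ 2 μ => L f) hzero
      simpa using this
    have hkey : M (closedBall z 1) (T f) =
        ((M (closedBall z 1)).comp T) (M (ball z (dT+2)) f) := by
      conv_lhs => rw [← hid]
      rw [map_add, map_add, h0, add_zero, ContinuousLinearMap.comp_apply]
    rw [hkey]
    exact le_trans (ContinuousLinearMap.le_opNorm _ _)
      (mul_le_mul_of_nonneg_right (hSle z) (norm_nonneg _))
  -- step 3: per-ball bound in ENNReal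
  have step3 : ∀ z : X,
      ∫⁻ x, (closedBall z 1).indicator (fun y => (‖g y‖₊:ℝ≥0∞)^2) x ∂μ ≤
      (ENNReal.ofReal S)^2 *
        ∫⁻ x, (ball z (dT+2)).indicator (fun y => (‖(f : X → ℂ) y‖₊:ℝ≥0∞)^2) x ∂μ := by
    intro z
    have e1 : ∫⁻ x, (closedBall z 1).indicator (fun y => (‖g y‖₊:ℝ≥0∞)^2) x ∂μ
        = eLpNorm ((closedBall z 1).indicator g) 2 μ ^ 2 := by
      rw [sq_eLpNorm]
      refine lintegral_congr fun x => ?_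
      rw [hindsq]
    have e2 : ∫⁻ x, (ball z (dT+2)).indicator (fun y => (‖(f : X → ℂ) y‖₊:ℝ≥0∞)^2) x ∂μ
        = eLpNorm ((ball z (dT+2)).indicator ⇑f) 2 μ ^ 2 := by
      rw [sq_eLpNorm]
      refine lintegral_congr fun x => ?_
      rw [hindsq]
    rw [e1, e2, ← hMnorm _ measurableSet_closedBall (T f),
      ← hMnorm _ measurableSet_ball f, ← mul_pow]
    refine pow_le_pow_left' ?_ 2
    rw [← ENNReal.ofReal_mul hS0]
    exact ENNReal.ofReal_le_ofReal (hop z)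
  -- step 4: summing up
  have step4 : ∑' (z : Z), ∫⁻ x, (ball (z:X) (dT+2)).indicator
        (fun y => (‖(f : X → ℂ) y‖₊:ℝ≥0∞)^2) x ∂μ
      ≤ ENNReal.ofReal N * eLpNorm (⇑f) 2 μ ^ 2 := by
    rw [← lintegral_tsum fun z : Z =>
      (hfmeas.indicator measurableSet_ball :
        AEMeasurable ((ball (z:X) (dT+2)).indicator fun y => (‖(f : X → ℂ) y‖₊:ℝ≥0∞)^2) μ)]
    rw [sq_eLpNorm, ← lintegral_const_mul' _ _ ENNReal.ofReal_ne_top]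
    refine lintegral_mono fun x => ?_
    calc ∑' (z : Z), (ball (z:X) (dT+2)).indicator (fun y => (‖(f : X → ℂ) y‖₊:ℝ≥0∞)^2) x
        = ∑' (z : Z), (ball (z:X) (dT+2)).indicator (1:X→ℝ≥0∞) x * (‖(f : X → ℂ) x‖₊:ℝ≥0∞)^2 := by
          refine tsum_congr fun z => ?_
          exact hind (ball (z:X) (dT+2)) (fun y => (‖(f : X → ℂ) y‖₊:ℝ≥0∞)^2) x
      _ = (∑' (z : Z), (ball (z:X) (dT+2)).indicator (1:X→ℝ≥0∞) x) * (‖(f : X → ℂ) x‖₊:ℝ≥0∞)^2 :=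
          ENNReal.tsum_mul_right
      _ ≤ ENNReal.ofReal N * (‖(f : X → ℂ) x‖₊:ℝ≥0∞)^2 :=
          mul_le_mul_left (hmult x) _
  -- combine
  have main : eLpNorm g 2 μ ^ 2 ≤
      (ENNReal.ofReal S)^2 * (ENNReal.ofReal N * eLpNorm (⇑f) 2 μ ^ 2) := by
    refine step1.trans ?_
    calc ∑' (z : Z), ∫⁻ x, (closedBall (z:X) 1).indicator (fun y => (‖g y‖₊:ℝ≥0∞)^2) x ∂μ
        ≤ ∑' (z : Z), (ENNReal.ofReal S)^2 *
            ∫⁻ x, (ball (z:X) (dT+2)).indicator (fun y => (‖(f : X → ℂ) y‖₊:ℝ≥0∞)^2) x ∂μ :=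
          ENNReal.tsum_le_tsum fun z => step3 z
      _ = (ENNReal.ofReal S)^2 * ∑' (z : Z), ∫⁻ x, (ball (z:X) (dT+2)).indicator
            (fun y => (‖(f : X → ℂ) y‖₊:ℝ≥0∞)^2) x ∂μ := ENNReal.tsum_mul_left
      _ ≤ (ENNReal.ofReal S)^2 * (ENNReal.ofReal N * eLpNorm (⇑f) 2 μ ^ 2) :=
          mul_le_mul_right step4 _
  -- extract real inequality
  have hrhs_ne : (ENNReal.ofReal S)^2 * (ENNReal.ofReal N * eLpNorm (⇑f) 2 μ ^ 2) ≠ ⊤ :=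
    ENNReal.mul_ne_top (ENNReal.pow_ne_top ENNReal.ofReal_ne_top)
      (ENNReal.mul_ne_top ENNReal.ofReal_ne_top (ENNReal.pow_ne_top (Lp.eLpNorm_ne_top f)))
  have hreal : ‖T f‖^2 ≤ S^2 * (N * ‖f‖^2) := by
    have := ENNReal.toReal_mono hrhs_ne main
    rwa [ENNReal.toReal_mul, ENNReal.toReal_mul, ENNReal.toReal_pow, ENNReal.toReal_pow,
      ENNReal.toReal_pow, ENNReal.toReal_ofReal hS0, ENNReal.toReal_ofReal hN0,
      ← Lp.norm_def, ← Lp.norm_def] at this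
  have h := Real.sqrt_le_sqrt hreal
  rw [Real.sqrt_sq (norm_nonneg _)] at h
  calc ‖T f‖ ≤ Real.sqrt (S^2 * (N * ‖f‖^2)) := h
    _ = Real.sqrt N * S * ‖f‖ := by
        rw [Real.sqrt_mul (sq_nonneg S), Real.sqrt_sq hS0, Real.sqrt_mul hN0,
          Real.sqrt_sq (norm_nonneg f)]
        ring
end

section
/- Let (X,d,μ) satisfy inf_x μ(B_x(1/2)) > 0 and sup_x μ(B_x(r)) < ∞ for all r. Let T be a bounded controlled locally compact operator on L²(X,μ) such that ‖𝟙_{B_x(1)} T‖ → 0 as x → ∞ (along the filter of complements of compact sets). Then T is a compact operator. -/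
open MeasureTheory Metric ENNReal

section Aux

lemma my_exists_maximal_separated (X : Type*) [MetricSpace X] :
    ∃ D : Set X, (∀ x ∈ D, ∀ y ∈ D, x ≠ y → 1 < dist x y) ∧ ∀ x : X, ∃ d ∈ D, dist x d ≤ 1 := by
  have hz : ∀ c ⊆ {S : Set X | ∀ x ∈ S, ∀ y ∈ S, x ≠ y → 1 < dist x y},
      IsChain (· ⊆ ·) c → ∃ ub ∈ {S : Set X | ∀ x ∈ S, ∀ y ∈ S, x ≠ y → 1 < dist x y},
        ∀ s ∈ c, s ⊆ ub := by
    intro c hc hchain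
    refine ⟨⋃₀ c, ?_, fun s hs => Set.subset_sUnion_of_mem hs⟩
    rintro x ⟨s, hs, hxs⟩ y ⟨t, ht, hyt⟩ hxy
    rcases hchain.total hs ht with h | h
    · exact hc ht x (h hxs) y hyt hxy
    · exact hc hs x hxs y (h hyt) hxy
  obtain ⟨D, hD⟩ := zorn_subset _ hz
  refine ⟨D, hD.prop, fun x => ?_⟩
  by_contra h
  push_neg at h
  have hx : x ∉ D := fun hxD => by have := h x hxD; rw [dist_self] at this; linarith
  have hins : insert x D ∈ {S : Set X | ∀ x ∈ S, ∀ y ∈ S, x ≠ y → 1 < dist x y} := by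
    rintro a (rfl | ha) b (rfl | hb) hab
    · exact absurd rfl hab
    · exact h b hb
    · rw [dist_comm]; exact h a ha
    · exact hD.prop a ha b hb hab
  exact hx (hD.2 hins (Set.subset_insert x D) (Set.mem_insert x D))

variable {X : Type*} [MeasurableSpace X] {μ : Measure X}

noncomputable def Efun (μ : Measure X) (g : Lp ℂ 2 μ) : ℝ≥0∞ :=
  ∫⁻ x, ((‖g x‖₊ : ℝ≥0∞)) ^ (2:ℝ) ∂μ

lemma Efun_eq (g : Lp ℂ 2 μ) : Efun μ g = (ENNReal.ofReal ‖g‖) ^ 2 := by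
  have h1 : ENNReal.ofReal ‖g‖ = eLpNorm g 2 μ := by
    rw [Lp.norm_def, ENNReal.ofReal_toReal (Lp.eLpNorm_ne_top g)]
  rw [h1, eLpNorm_eq_lintegral_rpow_enorm_toReal (by norm_num) (by norm_num)]
  rw [← ENNReal.rpow_natCast _ 2, ← ENNReal.rpow_mul]
  norm_num [Efun]
  rfl

lemma Efun_ind {B : Set X} {u v : Lp ℂ 2 μ} (huv : ⇑u =ᵐ[μ] B.indicator ⇑v) :
    Efun μ u = ∫⁻ x, B.indicator (fun x => ((‖v x‖₊ : ℝ≥0∞)) ^ (2:ℝ)) x ∂μ := by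
  refine lintegral_congr_ae ?_
  filter_upwards [huv] with x hx
  rw [hx]
  by_cases hxB : x ∈ B
  · rw [Set.indicator_of_mem hxB, Set.indicator_of_mem hxB]
  · rw [Set.indicator_of_notMem hxB, Set.indicator_of_notMem hxB]
    simp

lemma norm_le_of_ind {B : Set X} {u v : Lp ℂ 2 μ} (huv : ⇑u =ᵐ[μ] B.indicator ⇑v) :
    ‖u‖ ≤ ‖v‖ := by
  rw [Lp.norm_def, Lp.norm_def]
  refine ENNReal.toReal_mono (Lp.eLpNorm_ne_top v) ?_
  rw [eLpNorm_congr_ae huv]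
  exact eLpNorm_mono_ae (Filter.Eventually.of_forall fun x => norm_indicator_le_norm_self _ _)

end Aux
theorem stmt19 {X : Type*} [MetricSpace X] [ProperSpace X]
    [MeasurableSpace X] [BorelSpace X] (μ : Measure X)
    (ν : ℝ) (hν : 0 < ν) (hν' : ∀ x : X, ν ≤ (μ (closedBall x (1/2))).toReal)
    (V : ℝ → ℝ) (hV : ∀ (x : X) (r : ℝ), (μ (closedBall x r)).toReal ≤ V r)
    (M : Set X → (Lp ℂ 2 μ →L[ℂ] Lp ℂ 2 μ))
    (hM : ∀ A : Set X, MeasurableSet A → ∀ f : Lp ℂ 2 μ,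
      ⇑(M A f) =ᵐ[μ] A.indicator ⇑f)
    (T : Lp ℂ 2 μ →L[ℂ] Lp ℂ 2 μ) (dT : ℝ) (hdT : 0 ≤ dT)
    (hctrl : ∀ F G : Set X, IsClosed F → IsClosed G →
      (ENNReal.ofReal dT < ⨅ x ∈ F, ⨅ y ∈ G, edist x y) →
      (M F).comp (T.comp (M G)) = 0)
    (hloc : ∀ K : Set X, IsCompact K →
      IsCompactOperator ⇑((M K).comp T) ∧ IsCompactOperator ⇑(T.comp (M K)))
    (hvanish : Filter.Tendsto (fun x : X => ‖(M (closedBall x 1)).comp T‖)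
      (Filter.cocompact X) (nhds 0)) :
    IsCompactOperator ⇑T := by
  classical
  rcases isEmpty_or_nonempty X with hX | hX
  · -- empty space : every element of Lp is 0
    have hsub : ∀ g : Lp ℂ 2 μ, g = 0 := fun g =>
      Lp.ext (by
        filter_upwards [Lp.coeFn_zero (E := ℂ) (p := 2) (μ := μ)] with x _
        exact (IsEmpty.false x).elim)
    refine ⟨{0}, isCompact_singleton, ?_⟩
    have huniv : ⇑T ⁻¹' {0} = Set.univ := by
      ext g; simp [hsub (T g)]
    rw [huniv]
    exact Filter.univ_mem
  -- nonempty case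
  obtain ⟨x₀⟩ := hX
  -- basic measure facts
  have hfin : ∀ x : X, μ (closedBall x (1/2)) ≠ ∞ := by
    intro x h
    have := hν' x
    rw [h] at this; simp at this
    linarith
  have hνball : ∀ x : X, ENNReal.ofReal ν ≤ μ (closedBall x (1/2)) := fun x => by
    rw [← ENNReal.ofReal_toReal (hfin x)]
    exact ENNReal.ofReal_le_ofReal (hν' x)
  have hcompfin : ∀ K : Set X, IsCompact K → μ K ≠ ∞ := by
    intro K hK
    obtain ⟨t, _, ht⟩ := hK.elim_nhds_subcover (fun x => ball x (1/2))
      (fun x _ => ball_mem_nhds x (by norm_num))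
    have hle : μ K ≤ ∑ x ∈ t, μ (closedBall x (1/2)) :=
      le_trans (measure_mono (ht.trans (Set.iUnion₂_mono fun x _ => ball_subset_closedBall)))
        (measure_biUnion_finset_le t _)
    exact ne_top_of_le_ne_top (ENNReal.sum_lt_top.2 fun x _ => (hfin x).lt_top).ne hle
  have hballfin : ∀ (y : X) (R : ℝ), μ (closedBall y R) ≠ ∞ := fun y R =>
    hcompfin _ (isCompact_closedBall y R)
  have hballV : ∀ (y : X) (R : ℝ), μ (closedBall y R) ≤ ENNReal.ofReal (V R) := fun y R => by
    rw [← ENNReal.ofReal_toReal (hballfin y R)]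
    exact ENNReal.ofReal_le_ofReal (hV y R)
  -- the separated net
  obtain ⟨D, hDsep, hDcov⟩ := my_exists_maximal_separated X
  have hcard : ∀ (y : X) (R : ℝ) (t : Finset X), ↑t ⊆ D ∩ closedBall y R →
      (t.card : ℝ) * ν ≤ V (R + 1/2) := by
    intro y R t ht
    have hdisj : (↑t : Set X).PairwiseDisjoint fun d => closedBall d (1/2) := by
      intro a ha b hb hab
      have h1 : 1 < dist a b := hDsep a (ht ha).1 b (ht hb).1 hab
      exact closedBall_disjoint_closedBall (by linarith)
    have hmu : (t.card : ℝ≥0∞) * ENNReal.ofReal ν ≤ ENNReal.ofReal (V (R + 1/2)) := by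
      calc (t.card : ℝ≥0∞) * ENNReal.ofReal ν = ∑ _d ∈ t, ENNReal.ofReal ν := by
            rw [Finset.sum_const, nsmul_eq_mul]
        _ ≤ ∑ d ∈ t, μ (closedBall d (1/2)) := Finset.sum_le_sum fun d _ => hνball d
        _ = μ (⋃ d ∈ t, closedBall d (1/2)) :=
            (measure_biUnion_finset hdisj fun d _ => measurableSet_closedBall).symm
        _ ≤ μ (closedBall y (R + 1/2)) := measure_mono (Set.iUnion₂_subset fun d hd z hz => by
            rw [mem_closedBall] at hz ⊢
            have h1 : dist d y ≤ R := (ht hd).2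
            calc dist z y ≤ dist z d + dist d y := dist_triangle _ _ _
              _ ≤ R + 1/2 := by linarith)
        _ ≤ ENNReal.ofReal (V (R + 1/2)) := hballV y (R + 1/2)
    have hV0 : 0 ≤ V (R + 1/2) := le_trans ENNReal.toReal_nonneg (hV y (R + 1/2))
    have hcast : (t.card : ℝ≥0∞) * ENNReal.ofReal ν = ENNReal.ofReal ((t.card : ℝ) * ν) := by
      rw [ENNReal.ofReal_mul (Nat.cast_nonneg _), ENNReal.ofReal_natCast]
    rw [hcast, ENNReal.ofReal_le_ofReal_iff hV0] at hmu
    exact hmu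
  have hDfin : ∀ (y : X) (R : ℝ), (D ∩ closedBall y R).Finite := by
    intro y R
    rw [← Set.not_infinite]
    intro hinf
    obtain ⟨t, hts, htc⟩ := hinf.exists_subset_card_eq (⌈V (R + 1/2) / ν⌉₊ + 1)
    have h1 := hcard y R t hts
    rw [htc] at h1
    have h2 : ((⌈V (R + 1/2) / ν⌉₊ + 1 : ℕ) : ℝ) ≤ V (R + 1/2) / ν := (le_div_iff₀ hν).2 h1
    have h3 : V (R + 1/2) / ν ≤ ⌈V (R + 1/2) / ν⌉₊ := Nat.le_ceil _
    push_cast at h2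
    linarith
  have hDcount : D.Countable := by
    have hsub : D ⊆ ⋃ n : ℕ, (D ∩ closedBall x₀ n) := fun d hd =>
      Set.mem_iUnion.2 ⟨⌈dist d x₀⌉₊, hd, by
        rw [mem_closedBall]; exact Nat.le_ceil _⟩
    exact (Set.countable_iUnion fun n : ℕ => (hDfin x₀ n).countable).mono hsub
  haveI := hDcount.to_subtype
  obtain ⟨idx, hidx⟩ := Countable.exists_injective_nat ↥D
  -- the partition
  set A : ↥D → Set X := fun d =>
    closedBall (d : X) 1 \ ⋃ (d' : ↥D) (_ : idx d' < idx d), closedBall (d' : X) 1 with hA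
  have hAmeas : ∀ d : ↥D, MeasurableSet (A d) := fun d =>
    measurableSet_closedBall.diff
      (MeasurableSet.iUnion fun d' => MeasurableSet.iUnion fun _ => measurableSet_closedBall)
  have hAsub : ∀ d : ↥D, A d ⊆ closedBall (d : X) 1 := fun d => Set.diff_subset
  have hA_ex : ∀ x : X, ∃ d : ↥D, x ∈ A d ∧ ∀ d' : ↥D, d' ≠ d → x ∉ A d' := by
    intro x
    obtain ⟨d, hdD, hdx⟩ := hDcov x
    have hex : ∃ n : ℕ, ∃ d' : ↥D, idx d' = n ∧ x ∈ closedBall (d' : X) 1 :=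
      ⟨idx ⟨d, hdD⟩, ⟨d, hdD⟩, rfl, by rwa [mem_closedBall]⟩
    obtain ⟨d₀, hd₀n, hd₀x⟩ := Nat.find_spec hex
    refine ⟨d₀, ⟨hd₀x, ?_⟩, ?_⟩
    · intro hmem
      rw [Set.mem_iUnion] at hmem
      obtain ⟨d', hd'⟩ := hmem
      rw [Set.mem_iUnion] at hd'
      obtain ⟨hlt, hx'⟩ := hd'
      exact Nat.find_min hex (hd₀n ▸ hlt) ⟨d', rfl, hx'⟩
    · intro d' hne hxA'
      have hx' : x ∈ closedBall (d' : X) 1 := hAsub d' hxA'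
      have hge : Nat.find hex ≤ idx d' := Nat.find_min' hex ⟨d', rfl, hx'⟩
      rcases lt_or_eq_of_le hge with hlt | heq
      · refine hxA'.2 (Set.mem_iUnion.2 ⟨d₀, Set.mem_iUnion.2 ⟨?_, hd₀x⟩⟩)
        rw [hd₀n]
        exact hlt
      · exact hne (hidx (by rw [hd₀n, ← heq]))
  -- the constant
  set Vν : ℝ := V (dT + 2 + 1/2) / ν with hVνdef
  have hVVν : ν ≤ V (dT + 2 + 1/2) := by
    refine le_trans (hν' x₀) (le_trans ?_ (hV x₀ (dT + 2 + 1/2)))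
    exact ENNReal.toReal_mono (hballfin x₀ _)
      (measure_mono (closedBall_subset_closedBall (by linarith)))
  have hVν : 0 < Vν := div_pos (lt_of_lt_of_le hν hVVν) hν
  -- multiplicity bound
  have hmult : ∀ x : X,
      (∑' d : ↥D, (closedBall (d : X) (dT + 2)).indicator (fun _ => (1 : ℝ≥0∞)) x)
        ≤ ENNReal.ofReal Vν := by
    intro x
    rw [ENNReal.tsum_eq_iSup_sum]
    refine iSup_le fun s => ?_
    set P : ↥D → Prop := fun d => x ∈ closedBall (d : X) (dT + 2) with hP
    have hsum : ∑ d ∈ s, (closedBall (d : X) (dT + 2)).indicator (fun _ => (1 : ℝ≥0∞)) x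
        = ((s.filter P).card : ℝ≥0∞) := by
      rw [← Finset.sum_boole]
      refine Finset.sum_congr rfl fun d _ => ?_
      by_cases hxd : x ∈ closedBall (d : X) (dT + 2)
      · rw [Set.indicator_of_mem hxd]
        exact (if_pos hxd).symm
      · rw [Set.indicator_of_notMem hxd]
        exact (if_neg hxd).symm
    rw [hsum]
    have hsub : ↑((s.filter P).image Subtype.val) ⊆ D ∩ closedBall x (dT + 2) := by
      intro z hz
      simp only [Finset.coe_image, Set.mem_image, Finset.mem_coe, Finset.mem_filter] at hz
      obtain ⟨d, ⟨_, hPd⟩, rfl⟩ := hz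
      refine ⟨d.2, ?_⟩
      rw [mem_closedBall, dist_comm]
      exact hPd
    have hc := hcard x (dT + 2) ((s.filter P).image Subtype.val) hsub
    rw [Finset.card_image_of_injective _ Subtype.val_injective] at hc
    have hle : ((s.filter P).card : ℝ) ≤ Vν := (le_div_iff₀ hν).2 hc
    calc ((s.filter P).card : ℝ≥0∞) = ENNReal.ofReal ((s.filter P).card : ℝ) := by
          rw [ENNReal.ofReal_natCast]
      _ ≤ ENNReal.ofReal Vν := ENNReal.ofReal_le_ofReal hle
  -- operator algebra lemmas
  have hMM : ∀ A₁ B₁ : Set X, MeasurableSet A₁ → MeasurableSet B₁ → ∀ f : Lp ℂ 2 μ,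
      M A₁ (M B₁ f) = M (A₁ ∩ B₁) f := by
    intro A₁ B₁ hA₁ hB₁ f
    refine Lp.ext ?_
    filter_upwards [hM A₁ hA₁ (M B₁ f), hM B₁ hB₁ f, hM (A₁ ∩ B₁) (hA₁.inter hB₁) f]
      with x h1 h2 h3
    rw [h1, h3, ← Set.indicator_indicator]
    by_cases hx : x ∈ A₁
    · rw [Set.indicator_of_mem hx, Set.indicator_of_mem hx, h2]
    · rw [Set.indicator_of_notMem hx, Set.indicator_of_notMem hx]
  have hdecomp : ∀ B₁ : Set X, MeasurableSet B₁ → ∀ f : Lp ℂ 2 μ,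
      f = M B₁ f + M B₁ᶜ f := by
    intro B₁ hB₁ f
    refine Lp.ext ?_
    filter_upwards [Lp.coeFn_add (M B₁ f) (M B₁ᶜ f), hM B₁ hB₁ f, hM B₁ᶜ hB₁.compl f]
      with x h1 h2 h3
    rw [h1, Pi.add_apply, h2, h3, Set.indicator_self_add_compl_apply]
  -- the control lemma
  have hL3 : ∀ c : X, ∀ f : Lp ℂ 2 μ,
      M (closedBall c 1) (T f) = M (closedBall c 1) (T (M (closedBall c (dT + 2)) f)) := by
    intro c f
    have hG : IsClosed ((ball c (dT + 2))ᶜ) := isOpen_ball.isClosed_compl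
    have hzero : (M (closedBall c 1)).comp (T.comp (M ((ball c (dT + 2))ᶜ))) = 0 := by
      refine hctrl _ _ isClosed_closedBall hG ?_
      have hlow : ENNReal.ofReal (dT + 1)
          ≤ ⨅ x ∈ closedBall c 1, ⨅ y ∈ (ball c (dT + 2))ᶜ, edist x y := by
        refine le_iInf₂ fun x hx => le_iInf₂ fun y hy => ?_
        rw [edist_dist]
        refine ENNReal.ofReal_le_ofReal ?_
        rw [mem_closedBall] at hx
        rw [Set.mem_compl_iff, mem_ball, not_lt] at hy
        have htri := dist_triangle y x c
        rw [dist_comm y x] at htri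
        linarith
      refine lt_of_lt_of_le ?_ hlow
      exact (ENNReal.ofReal_lt_ofReal_iff_of_nonneg hdT).2 (by linarith)
    have hsplit := hdecomp (closedBall c (dT + 2)) measurableSet_closedBall f
    have h2 : M ((ball c (dT + 2))ᶜ) (M (closedBall c (dT + 2))ᶜ f)
        = M (closedBall c (dT + 2))ᶜ f := by
      rw [hMM _ _ hG.measurableSet measurableSet_closedBall.compl,
        show (ball c (dT + 2))ᶜ ∩ (closedBall c (dT + 2))ᶜ = (closedBall c (dT + 2))ᶜ from
          Set.inter_eq_right.2 (Set.compl_subset_compl.2 ball_subset_closedBall)]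
    have h3 : M (closedBall c 1) (T (M (closedBall c (dT + 2))ᶜ f)) = 0 := by
      rw [← h2]
      have hz := DFunLike.congr_fun hzero (M (closedBall c (dT + 2))ᶜ f)
      simpa using hz
    calc M (closedBall c 1) (T f)
        = M (closedBall c 1) (T (M (closedBall c (dT + 2)) f))
          + M (closedBall c 1) (T (M (closedBall c (dT + 2))ᶜ f)) := by
          conv_lhs => rw [hsplit]
          rw [map_add, map_add]
      _ = M (closedBall c 1) (T (M (closedBall c (dT + 2)) f)) := by
          rw [h3, add_zero]
  -- the key approximation
  have key : ∀ ε : ℝ, 0 < ε → ∃ S : Lp ℂ 2 μ →L[ℂ] Lp ℂ 2 μ,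
      IsCompactOperator ⇑S ∧ ‖T - S‖ ≤ ε := by
    intro ε hε
    have hsq : 0 < Real.sqrt Vν := Real.sqrt_pos.2 hVν
    set ε' : ℝ := ε / Real.sqrt Vν with hε'def
    have hε' : 0 < ε' := div_pos hε hsq
    have hev : ∀ᶠ x in Filter.cocompact X, ‖(M (closedBall x 1)).comp T‖ < ε' := by
      have hmem := Metric.tendsto_nhds.mp hvanish ε' hε'
      refine hmem.mono fun x hx => ?_
      rwa [Real.dist_eq, sub_zero, abs_of_nonneg (norm_nonneg _)] at hx
    obtain ⟨K₀, hK₀c, hK₀⟩ := Filter.mem_cocompact.mp hev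
    set K : Set X := Metric.cthickening 2 K₀ with hKdef
    have hKcomp : IsCompact K :=
      isCompact_of_isClosed_isBounded Metric.isClosed_cthickening hK₀c.isBounded.cthickening
    have hKm : MeasurableSet K := Metric.isClosed_cthickening.measurableSet
    refine ⟨(M K).comp T, (hloc K hKcomp).1, ?_⟩
    have hbound : ∀ f : Lp ℂ 2 μ, ‖(T - (M K).comp T) f‖ ≤ ε' * Real.sqrt Vν * ‖f‖ := by
      intro f
      have hTf : (T - (M K).comp T) f = M Kᶜ (T f) := by
        have hd := hdecomp K hKm (T f)
        simp only [ContinuousLinearMap.sub_apply, ContinuousLinearMap.comp_apply]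
        exact sub_eq_iff_eq_add'.2 hd
      rw [hTf]
      -- the central ENNReal estimate
      have hh2m : AEMeasurable (fun x => ((‖(T f) x‖₊ : ℝ≥0∞)) ^ (2:ℝ)) μ := by
        have hmz : Measurable fun z : ℂ => ((‖z‖₊ : ℝ≥0∞)) ^ (2:ℝ) :=
          (measurable_coe_nnreal_ennreal.comp measurable_nnnorm).pow_const _
        exact hmz.comp_aemeasurable (Lp.aestronglyMeasurable (T f)).aemeasurable
      have hh3m : AEMeasurable (fun x => ((‖f x‖₊ : ℝ≥0∞)) ^ (2:ℝ)) μ := by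
        have hmz : Measurable fun z : ℂ => ((‖z‖₊ : ℝ≥0∞)) ^ (2:ℝ) :=
          (measurable_coe_nnreal_ennreal.comp measurable_nnnorm).pow_const _
        exact hmz.comp_aemeasurable (Lp.aestronglyMeasurable f).aemeasurable
      have hpt : ∀ x, Kᶜ.indicator (fun x => ((‖(T f) x‖₊ : ℝ≥0∞)) ^ (2:ℝ)) x
          = ∑' d : ↥D, (A d ∩ Kᶜ).indicator (fun x => ((‖(T f) x‖₊ : ℝ≥0∞)) ^ (2:ℝ)) x := by
        intro x
        obtain ⟨d₀, hd₀, hUniq⟩ := hA_ex x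
        rw [tsum_eq_single d₀ ?_]
        · by_cases hx : x ∈ Kᶜ
          · rw [Set.indicator_of_mem hx, Set.indicator_of_mem (Set.mem_inter hd₀ hx)]
          · rw [Set.indicator_of_notMem hx,
              Set.indicator_of_notMem (fun hc => hx hc.2)]
        · intro d hd
          exact Set.indicator_of_notMem (fun hc => hUniq d hd hc.1) _
      have step1 : Efun μ (M Kᶜ (T f))
          = ∑' d : ↥D, ∫⁻ x, (A d ∩ Kᶜ).indicator
              (fun x => ((‖(T f) x‖₊ : ℝ≥0∞)) ^ (2:ℝ)) x ∂μ := by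
        rw [Efun_ind (hM Kᶜ hKm.compl (T f)), lintegral_congr hpt]
        exact lintegral_tsum fun d => hh2m.indicator ((hAmeas d).inter hKm.compl)
      have step2 : ∀ d : ↥D, ∫⁻ x, (A d ∩ Kᶜ).indicator
            (fun x => ((‖(T f) x‖₊ : ℝ≥0∞)) ^ (2:ℝ)) x ∂μ
          ≤ ENNReal.ofReal ε' ^ 2 * Efun μ (M (closedBall (d : X) (dT + 2)) f) := by
        intro d
        have hAKm : MeasurableSet (A d ∩ Kᶜ) := (hAmeas d).inter hKm.compl
        rcases Set.eq_empty_or_nonempty (A d ∩ Kᶜ) with he | ⟨y, hy⟩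
        · rw [he]
          simp
        · have hdK₀ : (d : X) ∉ K₀ := by
            intro hdK
            apply hy.2
            rw [hKdef, Metric.mem_cthickening_iff]
            calc EMetric.infEdist y K₀ ≤ edist y (d : X) :=
                EMetric.infEdist_le_edist_of_mem hdK
              _ = ENNReal.ofReal (dist y (d : X)) := edist_dist _ _
              _ ≤ ENNReal.ofReal 2 := ENNReal.ofReal_le_ofReal (by
                  have h1 : dist y (d : X) ≤ 1 := hAsub d hy.1
                  linarith)
          have hdnorm : ‖(M (closedBall (d : X) 1)).comp T‖ < ε' := hK₀ hdK₀
          have hnormle : ‖M (A d ∩ Kᶜ) (T f)‖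
              ≤ ε' * ‖M (closedBall (d : X) (dT + 2)) f‖ := by
            have e1 : M (A d ∩ Kᶜ) (T f)
                = M (A d ∩ Kᶜ) (M (closedBall (d : X) 1) (T f)) := by
              rw [hMM _ _ hAKm measurableSet_closedBall,
                Set.inter_eq_left.2 (fun z hz => hAsub d hz.1)]
            rw [e1, hL3 (d : X) f]
            calc ‖M (A d ∩ Kᶜ) (M (closedBall (d : X) 1)
                  (T (M (closedBall (d : X) (dT + 2)) f)))‖
                ≤ ‖M (closedBall (d : X) 1) (T (M (closedBall (d : X) (dT + 2)) f))‖ :=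
                  norm_le_of_ind (hM _ hAKm _)
              _ = ‖((M (closedBall (d : X) 1)).comp T) (M (closedBall (d : X) (dT + 2)) f)‖ :=
                  rfl
              _ ≤ ‖(M (closedBall (d : X) 1)).comp T‖
                    * ‖M (closedBall (d : X) (dT + 2)) f‖ :=
                  ContinuousLinearMap.le_opNorm _ _
              _ ≤ ε' * ‖M (closedBall (d : X) (dT + 2)) f‖ :=
                  mul_le_mul_of_nonneg_right hdnorm.le (norm_nonneg _)
          calc ∫⁻ x, (A d ∩ Kᶜ).indicator
                (fun x => ((‖(T f) x‖₊ : ℝ≥0∞)) ^ (2:ℝ)) x ∂μ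
              = Efun μ (M (A d ∩ Kᶜ) (T f)) := (Efun_ind (hM _ hAKm _)).symm
            _ = (ENNReal.ofReal ‖M (A d ∩ Kᶜ) (T f)‖) ^ 2 := Efun_eq _
            _ ≤ (ENNReal.ofReal (ε' * ‖M (closedBall (d : X) (dT + 2)) f‖)) ^ 2 :=
                pow_le_pow_left₀ zero_le (ENNReal.ofReal_le_ofReal hnormle) 2
            _ = ENNReal.ofReal ε' ^ 2
                  * (ENNReal.ofReal ‖M (closedBall (d : X) (dT + 2)) f‖) ^ 2 := by
                rw [ENNReal.ofReal_mul hε'.le, mul_pow]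
            _ = ENNReal.ofReal ε' ^ 2 * Efun μ (M (closedBall (d : X) (dT + 2)) f) := by
                rw [Efun_eq]
      have step3 : ∑' d : ↥D, Efun μ (M (closedBall (d : X) (dT + 2)) f)
          ≤ ENNReal.ofReal Vν * Efun μ f := by
        have heq : ∀ d : ↥D, Efun μ (M (closedBall (d : X) (dT + 2)) f)
            = ∫⁻ x, (closedBall (d : X) (dT + 2)).indicator
                (fun x => ((‖f x‖₊ : ℝ≥0∞)) ^ (2:ℝ)) x ∂μ := fun d =>
          Efun_ind (hM _ measurableSet_closedBall f)
        rw [tsum_congr heq,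
          ← lintegral_tsum fun d => hh3m.indicator measurableSet_closedBall]
        have hptw : ∀ x, (∑' d : ↥D, (closedBall (d : X) (dT + 2)).indicator
              (fun x => ((‖f x‖₊ : ℝ≥0∞)) ^ (2:ℝ)) x)
            ≤ ENNReal.ofReal Vν * ((‖f x‖₊ : ℝ≥0∞)) ^ (2:ℝ) := by
          intro x
          have hsplit : ∀ d : ↥D, (closedBall (d : X) (dT + 2)).indicator
                (fun x => ((‖f x‖₊ : ℝ≥0∞)) ^ (2:ℝ)) x
              = (closedBall (d : X) (dT + 2)).indicator (fun _ => (1 : ℝ≥0∞)) x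
                  * ((‖f x‖₊ : ℝ≥0∞)) ^ (2:ℝ) := by
            intro d
            by_cases hx : x ∈ closedBall (d : X) (dT + 2)
            · rw [Set.indicator_of_mem hx, Set.indicator_of_mem hx, one_mul]
            · rw [Set.indicator_of_notMem hx, Set.indicator_of_notMem hx, zero_mul]
          rw [tsum_congr hsplit, ENNReal.tsum_mul_right]
          exact mul_le_mul_left (hmult x) _
        calc ∫⁻ x, ∑' d : ↥D, (closedBall (d : X) (dT + 2)).indicator
              (fun x => ((‖f x‖₊ : ℝ≥0∞)) ^ (2:ℝ)) x ∂μ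
            ≤ ∫⁻ x, ENNReal.ofReal Vν * ((‖f x‖₊ : ℝ≥0∞)) ^ (2:ℝ) ∂μ :=
              lintegral_mono hptw
          _ = ENNReal.ofReal Vν * Efun μ f :=
              lintegral_const_mul' _ _ ENNReal.ofReal_ne_top
      have hcentral : Efun μ (M Kᶜ (T f))
          ≤ ENNReal.ofReal ε' ^ 2 * ENNReal.ofReal Vν * Efun μ f := by
        calc Efun μ (M Kᶜ (T f)) = _ := step1
          _ ≤ ∑' d : ↥D, ENNReal.ofReal ε' ^ 2
                * Efun μ (M (closedBall (d : X) (dT + 2)) f) :=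
              ENNReal.tsum_le_tsum step2
          _ = ENNReal.ofReal ε' ^ 2
                * ∑' d : ↥D, Efun μ (M (closedBall (d : X) (dT + 2)) f) :=
              ENNReal.tsum_mul_left
          _ ≤ ENNReal.ofReal ε' ^ 2 * (ENNReal.ofReal Vν * Efun μ f) :=
              mul_le_mul_right step3 _
          _ = ENNReal.ofReal ε' ^ 2 * ENNReal.ofReal Vν * Efun μ f :=
              (mul_assoc _ _ _).symm
      -- convert to a real inequality
      have hne : ENNReal.ofReal ε' ^ 2 * ENNReal.ofReal Vν * Efun μ f ≠ ∞ := by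
        rw [Efun_eq]
        exact ENNReal.mul_ne_top (ENNReal.mul_ne_top
          (ENNReal.pow_ne_top ENNReal.ofReal_ne_top) ENNReal.ofReal_ne_top)
          (ENNReal.pow_ne_top ENNReal.ofReal_ne_top)
      have hreal := ENNReal.toReal_mono hne hcentral
      rw [Efun_eq, Efun_eq] at hreal
      rw [ENNReal.toReal_pow, ENNReal.toReal_ofReal (norm_nonneg _)] at hreal
      rw [ENNReal.toReal_mul, ENNReal.toReal_mul, ENNReal.toReal_pow, ENNReal.toReal_pow,
        ENNReal.toReal_ofReal hε'.le, ENNReal.toReal_ofReal hVν.le,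
        ENNReal.toReal_ofReal (norm_nonneg _)] at hreal
      have hsq2 : ‖M Kᶜ (T f)‖ ^ 2 ≤ (ε' * Real.sqrt Vν * ‖f‖) ^ 2 := by
        have hid : (ε' * Real.sqrt Vν * ‖f‖) ^ 2 = ε' ^ 2 * Vν * ‖f‖ ^ 2 := by
          rw [mul_pow, mul_pow, Real.sq_sqrt hVν.le]
        rw [hid]
        exact hreal
      calc ‖M Kᶜ (T f)‖ = Real.sqrt (‖M Kᶜ (T f)‖ ^ 2) :=
            (Real.sqrt_sq (norm_nonneg _)).symm
        _ ≤ Real.sqrt ((ε' * Real.sqrt Vν * ‖f‖) ^ 2) := Real.sqrt_le_sqrt hsq2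
        _ = ε' * Real.sqrt Vν * ‖f‖ := Real.sqrt_sq (by positivity)
    have hfinal := ContinuousLinearMap.opNorm_le_bound _ (by positivity) hbound
    calc ‖T - (M K).comp T‖ ≤ ε' * Real.sqrt Vν := hfinal
      _ = ε := div_mul_cancel₀ ε hsq.ne'
  choose S hSc hSle using fun n : ℕ => key (1 / ((n : ℝ) + 1)) (by positivity)
  refine isCompactOperator_of_tendsto (l := Filter.atTop (α := ℕ)) (F := S) ?_
    (Filter.Eventually.of_forall hSc)
  rw [tendsto_iff_norm_sub_tendsto_zero]
  refine squeeze_zero (fun n => norm_nonneg _) (fun n => ?_)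
    tendsto_one_div_add_atTop_nhds_zero_nat
  rw [norm_sub_rev]
  exact hSle n
end
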